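/- Let (A,B) be a Pythagorean pair on 𝔥 with both ker(A) and ker(B) finite-dimensional, and let p be a periodic ray with period c of length d. Then 𝔛^p = {ξ : ‖p_nξ‖=‖ξ‖ for all n} is a finite-dimensional subspace and the restriction of φ(c) to 𝔛^p is a unitary operator on 𝔛^p. -/

import Mathlib

open Filter Topology

noncomputable def pythWord {H : Type*} [NormedAddCommGroup H] [InnerProductSpace ℂ H]
    (A B : H →L[ℂ] H) (w : List Bool) : H →L[ℂ] H :=
  (w.map (fun x => if x then B else A)).prod

/-- The operator `p_n` given by composing the operators of the first `n` letters of the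
ray `p` (first letter applied first). `false` stands for `a ↦ A`, `true` for `b ↦ B`. -/
noncomputable def rayOp {H : Type*} [NormedAddCommGroup H] [InnerProductSpace ℂ H]
    (A B : H →L[ℂ] H) (p : ℕ → Bool) (n : ℕ) : H →L[ℂ] H :=
  pythWord A B ((List.range n).reverse.map p)

section aux

variable {H : Type*} [NormedAddCommGroup H] [InnerProductSpace ℂ H] [CompleteSpace H]

lemma rayOp_zero (A B : H →L[ℂ] H) (p : ℕ → Bool) : rayOp A B p 0 = 1 := by
  simp [rayOp, pythWord]

lemma rayOp_succ (A B : H →L[ℂ] H) (p : ℕ → Bool) (n : ℕ) :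
    rayOp A B p (n + 1) = (if p n then B else A) * rayOp A B p n := by
  simp [rayOp, pythWord, List.range_succ]

lemma pyth_norm_sq (A B : H →L[ℂ] H)
    (hpyth : (ContinuousLinearMap.adjoint A).comp A
      + (ContinuousLinearMap.adjoint B).comp B = 1) (ξ : H) :
    ‖A ξ‖ ^ 2 + ‖B ξ‖ ^ 2 = ‖ξ‖ ^ 2 := by
  have h := congrArg (fun T : H →L[ℂ] H => inner ℂ (T ξ) ξ : (H →L[ℂ] H) → ℂ) hpyth
  simp only [ContinuousLinearMap.add_apply, ContinuousLinearMap.coe_comp',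
    Function.comp_apply, inner_add_left, ContinuousLinearMap.adjoint_inner_left,
    ContinuousLinearMap.one_apply] at h
  rw [inner_self_eq_norm_sq_to_K, inner_self_eq_norm_sq_to_K,
    inner_self_eq_norm_sq_to_K] at h
  exact_mod_cast h

end aux

theorem pythagorean_pair_periodic_ray_space_finiteDim_unitary
    {H : Type*} [NormedAddCommGroup H] [InnerProductSpace ℂ H] [CompleteSpace H]
    (A B : H →L[ℂ] H)
    (hpyth : (ContinuousLinearMap.adjoint A).comp A
      + (ContinuousLinearMap.adjoint B).comp B = 1)
    [FiniteDimensional ℂ (LinearMap.ker (A : H →ₗ[ℂ] H))] [FiniteDimensional ℂ (LinearMap.ker (B : H →ₗ[ℂ] H))]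
    (c : List Bool) (hc : c ≠ [])
    (p : ℕ → Bool) (hp : ∀ n, p n = c.getD (n % c.length) false) :
    FiniteDimensional ℂ
        (Submodule.span ℂ {ξ : H | ∀ n, ‖rayOp A B p n ξ‖ = ‖ξ‖}) ∧
      (∀ ξ : H, (∀ n, ‖rayOp A B p n ξ‖ = ‖ξ‖) →
        (∀ n, ‖rayOp A B p n (rayOp A B p c.length ξ)‖ = ‖rayOp A B p c.length ξ‖) ∧
          ‖rayOp A B p c.length ξ‖ = ‖ξ‖) ∧
      (∀ η : H, (∀ n, ‖rayOp A B p n η‖ = ‖η‖) →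
        ∃ ξ : H, (∀ n, ‖rayOp A B p n ξ‖ = ‖ξ‖) ∧ rayOp A B p c.length ξ = η) := by
  set d := c.length with hd
  have hd0 : 0 < d := List.length_pos_iff.mpr hc
  have key := pyth_norm_sq A B hpyth
  -- periodicity
  have hper : ∀ n, p (n + d) = p n := by
    intro n
    rw [hp, hp, Nat.add_mod_right]
  -- additivity of rayOp across the period
  have rayAdd : ∀ n, rayOp A B p (n + d) = rayOp A B p n * rayOp A B p d := by
    intro n
    induction n with
    | zero => simp [rayOp_zero]
    | succ n ih =>
        have : n + 1 + d = (n + d) + 1 := by ring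
        rw [this, rayOp_succ, hper, ih, rayOp_succ, mul_assoc]
  -- characterization of the ray space via kernels
  have memX : ∀ ξ : H, (∀ n, ‖rayOp A B p n ξ‖ = ‖ξ‖) ↔
      (∀ n, (if p n then A else B) (rayOp A B p n ξ) = 0) := by
    intro ξ
    constructor
    · intro h n
      have hk := key (rayOp A B p n ξ)
      have h1 : ‖(if p n then B else A) (rayOp A B p n ξ)‖ = ‖ξ‖ := by
        have := h (n + 1)
        rwa [rayOp_succ, ContinuousLinearMap.mul_apply] at this
      rw [h n] at hk
      cases hb : p n <;> simp only [hb, Bool.false_eq_true, if_true, if_false] at h1 ⊢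
      · -- p n = false : A preserves norm, so B kills
        have h2 : ‖A (rayOp A B p n ξ)‖ ^ 2 = ‖ξ‖ ^ 2 := by rw [h1]
        have : ‖B (rayOp A B p n ξ)‖ ^ 2 = 0 := by linarith
        have := pow_eq_zero_iff (n := 2) (by norm_num) |>.mp this
        rwa [norm_eq_zero] at this
      · have h2 : ‖B (rayOp A B p n ξ)‖ ^ 2 = ‖ξ‖ ^ 2 := by rw [h1]
        have : ‖A (rayOp A B p n ξ)‖ ^ 2 = 0 := by linarith
        have := pow_eq_zero_iff (n := 2) (by norm_num) |>.mp this
        rwa [norm_eq_zero] at this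
    · intro h n
      induction n with
      | zero => simp [rayOp_zero]
      | succ n ih =>
          have hk := key (rayOp A B p n ξ)
          rw [rayOp_succ, ContinuousLinearMap.mul_apply]
          have h0 := h n
          cases hb : p n <;> simp only [hb, Bool.false_eq_true, if_true, if_false] at h0 ⊢
          · rw [h0, norm_zero] at hk
            have h2 : ‖A (rayOp A B p n ξ)‖ ^ 2 = ‖ξ‖ ^ 2 := by rw [← ih]; linarith
            have := congrArg Real.sqrt h2
            rwa [Real.sqrt_sq (norm_nonneg _), Real.sqrt_sq (norm_nonneg _)] at this
          · rw [h0, norm_zero] at hk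
            have h2 : ‖B (rayOp A B p n ξ)‖ ^ 2 = ‖ξ‖ ^ 2 := by rw [← ih]; linarith
            have := congrArg Real.sqrt h2
            rwa [Real.sqrt_sq (norm_nonneg _), Real.sqrt_sq (norm_nonneg _)] at this
  -- the ray space as a submodule
  set M : Submodule ℂ H :=
    ⨅ n : ℕ, LinearMap.ker ((((if p n then A else B).comp (rayOp A B p n)) :
      H →L[ℂ] H) : H →ₗ[ℂ] H) with hM
  have memM : ∀ ξ : H, ξ ∈ M ↔ (∀ n, (if p n then A else B) (rayOp A B p n ξ) = 0) := by
    intro ξ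
    simp [hM, Submodule.mem_iInf, LinearMap.mem_ker]
  have hset : {ξ : H | ∀ n, ‖rayOp A B p n ξ‖ = ‖ξ‖} = (M : Set H) := by
    ext ξ
    simp only [Set.mem_setOf_eq, SetLike.mem_coe, memM, memX]
  -- part 2, proved first as it is used in part 3
  have part2 : ∀ ξ : H, (∀ n, ‖rayOp A B p n ξ‖ = ‖ξ‖) →
      (∀ n, ‖rayOp A B p n (rayOp A B p d ξ)‖ = ‖rayOp A B p d ξ‖) ∧
        ‖rayOp A B p d ξ‖ = ‖ξ‖ := by
    intro ξ hξ
    refine ⟨fun n => ?_, hξ d⟩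
    have : rayOp A B p n (rayOp A B p d ξ) = rayOp A B p (n + d) ξ := by
      rw [rayAdd n, ContinuousLinearMap.mul_apply]
    rw [this, hξ (n + d), hξ d]
  -- finite dimensionality of M
  have finM : FiniteDimensional ℂ M := by
    have hle : ∀ ξ ∈ M, (if p 0 then A else B) ξ = 0 := by
      intro ξ hξ
      have := (memM ξ).mp hξ 0
      rwa [rayOp_zero, ContinuousLinearMap.one_apply] at this
    cases hb : p 0
    · have : M ≤ LinearMap.ker (B : H →ₗ[ℂ] H) := by
        intro ξ hξ
        have := hle ξ hξ
        rw [hb] at this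
        simpa using this
      exact Submodule.finiteDimensional_of_le this
    · have : M ≤ LinearMap.ker (A : H →ₗ[ℂ] H) := by
        intro ξ hξ
        have := hle ξ hξ
        rw [hb] at this
        simpa using this
      exact Submodule.finiteDimensional_of_le this
  refine ⟨?_, part2, ?_⟩
  · rw [hset, Submodule.span_eq]
    exact finM
  · -- surjectivity on M
    intro η hη
    have hmap : ∀ x ∈ M, rayOp A B p d x ∈ M := by
      intro x hx
      rw [memM, ← memX]
      exact (part2 x ((memX x).mpr ((memM x).mp hx))).1
    let f : M →ₗ[ℂ] M := ((rayOp A B p d) : H →ₗ[ℂ] H).restrict hmap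
    have hinj : Function.Injective f := by
      rw [← LinearMap.ker_eq_bot, LinearMap.ker_eq_bot']
      intro x hx
      have hx0 : rayOp A B p d (x : H) = 0 := by
        have := congrArg (Subtype.val) hx
        simpa [f, LinearMap.restrict_apply] using this
      have hnorm : ‖rayOp A B p d (x : H)‖ = ‖(x : H)‖ :=
        (memX (x : H)).mpr ((memM (x : H)).mp x.2) d
      rw [hx0, norm_zero] at hnorm
      have hx1 : (x : H) = 0 := norm_eq_zero.mp hnorm.symm
      exact Subtype.ext (by simpa using hx1)
    have hsurj : Function.Surjective f :=
      (LinearMap.injective_iff_surjective (f := f)).mp hinj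
    have hηM : η ∈ M := by
      rw [memM, ← memX]; exact hη
    obtain ⟨ξ, hξ⟩ := hsurj ⟨η, hηM⟩
    refine ⟨(ξ : H), (memX (ξ : H)).mpr ((memM (ξ : H)).mp ξ.2), ?_⟩
    have := congrArg (Subtype.val) hξ
    simpa [f, LinearMap.restrict_apply] using this
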